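/- (Weighted product-average lemma; core computation of Theorem 4.1.) Let x, φ be real numbers and let (c_p)_{p≥1} be a bounded sequence of real numbers. Then (1/(2π)) ∫_0^{2π} exp(i x cos(ϑ − φ)) · ( J_0(x) + 2 ∑_{p=1}^∞ c_p i^p J_p(x) cos(p(ϑ − φ)) ) dϑ = J_0(x)² + 2 ∑_{p=1}^∞ (−1)^p c_p J_p(x)², where both series converge absolutely. -/

import Mathlib

open MeasureTheory Filter Complex intervalIntegral Real

noncomputable def besselJ (n : ℤ) (x : ℝ) : ℂ :=
  (1 / (2 * Real.pi)) * ∫ θ in (0:ℝ)..(2 * Real.pi),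
    Complex.exp (Complex.I * ((x : ℂ) * (Real.sin θ : ℂ) - (n : ℂ) * (θ : ℂ)))

lemma contI (x : ℝ) (n : ℤ) :
    Continuous fun θ : ℝ => Complex.exp (Complex.I * ((x:ℂ) * (Real.sin θ:ℂ) - (n:ℂ) * (θ:ℂ))) := by
  fun_prop

lemma norm_exp_eq_one (x : ℝ) (n : ℤ) (θ : ℝ) :
    ‖Complex.exp (Complex.I * ((x:ℂ) * (Real.sin θ:ℂ) - (n:ℂ) * (θ:ℂ)))‖ = 1 := by
  rw [Complex.norm_exp]
  simp [Complex.mul_re]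

lemma besselJ_norm_le_one (n : ℤ) (x : ℝ) : ‖besselJ n x‖ ≤ 1 := by
  have hpi := Real.pi_pos
  rw [besselJ]
  rw [norm_mul]
  have h1 : ‖(1 / (2 * (Real.pi:ℂ)))‖ = 1/(2*Real.pi) := by
    simp [abs_of_pos hpi]
  have h2 : ‖∫ θ in (0:ℝ)..(2 * Real.pi),
      Complex.exp (Complex.I * ((x : ℂ) * (Real.sin θ : ℂ) - (n : ℂ) * (θ : ℂ)))‖ ≤
      1 * |2*Real.pi - 0| := by
    apply intervalIntegral.norm_integral_le_of_norm_le_const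
    intro θ _
    exact (norm_exp_eq_one x n θ).le
  calc ‖(1 / (2 * (Real.pi:ℂ)))‖ * _ ≤ (1/(2*Real.pi)) * (1 * |2*Real.pi - 0|) := by
        rw [h1]; apply mul_le_mul_of_nonneg_left h2 (by positivity)
    _ = 1 := by
        rw [abs_of_pos (by linarith)]; field_simp; ring

-- derivative facts
lemma hasDerivAt_u1 (x : ℝ) (θ : ℝ) :
    HasDerivAt (fun θ : ℝ => Complex.exp (Complex.I * x * (Real.sin θ : ℂ)))
      (Complex.I * x * (Real.cos θ : ℂ) * Complex.exp (Complex.I * x * (Real.sin θ : ℂ))) θ := by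
  have h1 : HasDerivAt (fun θ : ℝ => ((Real.sin θ : ℝ) : ℂ)) ((Real.cos θ : ℂ)) θ :=
    (Real.hasDerivAt_sin θ).ofReal_comp
  have h2 := (h1.const_mul (Complex.I * x)).cexp
  simpa [mul_comm, mul_assoc, mul_left_comm] using h2

lemma hasDerivAt_u2 (x : ℝ) (θ : ℝ) :
    HasDerivAt (fun θ : ℝ => Complex.I * x * (Real.cos θ : ℂ) * Complex.exp (Complex.I * x * (Real.sin θ : ℂ)))
      (Complex.I * x * (-(Real.sin θ : ℂ)) * Complex.exp (Complex.I * x * (Real.sin θ : ℂ))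
        + Complex.I * x * (Real.cos θ : ℂ) *
          (Complex.I * x * (Real.cos θ : ℂ) * Complex.exp (Complex.I * x * (Real.sin θ : ℂ)))) θ := by
  have h1 : HasDerivAt (fun θ : ℝ => Complex.I * x * ((Real.cos θ : ℝ) : ℂ))
      (Complex.I * x * (-(Real.sin θ : ℂ))) θ := by
    have := ((Real.hasDerivAt_cos θ).ofReal_comp).const_mul (Complex.I * x)
    simpa using this
  exact h1.mul (hasDerivAt_u1 x θ)

lemma norm_exp_Ixsin (x θ : ℝ) : ‖Complex.exp (Complex.I * x * (Real.sin θ : ℂ))‖ = 1 := by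
  rw [Complex.norm_exp]
  simp [Complex.mul_re, Complex.mul_im]

lemma u2'_bound (x θ : ℝ) :
    ‖Complex.I * x * (-(Real.sin θ : ℂ)) * Complex.exp (Complex.I * x * (Real.sin θ : ℂ))
        + Complex.I * x * (Real.cos θ : ℂ) *
          (Complex.I * x * (Real.cos θ : ℂ) * Complex.exp (Complex.I * x * (Real.sin θ : ℂ)))‖
      ≤ |x| + x^2 := by
  have h1 : ‖Complex.I * x * (-(Real.sin θ : ℂ)) * Complex.exp (Complex.I * x * (Real.sin θ : ℂ))‖ ≤ |x| := by
    rw [norm_mul, norm_mul, norm_mul, norm_exp_Ixsin]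
    simp only [Complex.norm_I, norm_neg, Complex.norm_real, Real.norm_eq_abs, one_mul, mul_one]
    calc |x| * |Real.sin θ| ≤ |x| * 1 := by
          exact mul_le_mul_of_nonneg_left (abs_le.mpr ⟨Real.neg_one_le_sin θ, Real.sin_le_one θ⟩) (abs_nonneg x)
      _ = |x| := mul_one _
  have h2 : ‖Complex.I * x * (Real.cos θ : ℂ) *
        (Complex.I * x * (Real.cos θ : ℂ) * Complex.exp (Complex.I * x * (Real.sin θ : ℂ)))‖ ≤ x^2 := by
    rw [norm_mul, norm_mul, norm_mul, norm_mul, norm_mul, norm_exp_Ixsin]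
    simp only [norm_mul, Complex.norm_I, Complex.norm_real, Real.norm_eq_abs, one_mul, mul_one]
    have hc : |Real.cos θ| ≤ 1 := abs_le.mpr ⟨Real.neg_one_le_cos θ, Real.cos_le_one θ⟩
    have hx := abs_nonneg x
    have hcn := abs_nonneg (Real.cos θ)
    have hs : |x| * |x| = x ^ 2 := by rw [← abs_mul, ← sq, abs_sq]
    have h3 : |x| * |Real.cos θ| ≤ |x| := by
      simpa using mul_le_mul_of_nonneg_left hc hx
    have h4 := mul_self_le_mul_self (by positivity) h3
    linarith
  calc _ ≤ _ + _ := norm_add_le _ _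
    _ ≤ |x| + x^2 := add_le_add h1 h2

lemma hasDerivAt_expneg (n : ℤ) (θ : ℝ) :
    HasDerivAt (fun θ : ℝ => Complex.exp (-(Complex.I * n * θ)))
      (-(Complex.I * n) * Complex.exp (-(Complex.I * n * θ))) θ := by
  have h1 : HasDerivAt (fun θ : ℝ => ((θ:ℝ) : ℂ)) 1 θ := (hasDerivAt_id θ).ofReal_comp
  have h2 : HasDerivAt (fun θ : ℝ => -(Complex.I * n * (θ:ℂ))) (-(Complex.I * n)) θ := by
    have := (h1.const_mul (Complex.I * n)).neg
    simp only [mul_one] at this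
    exact this
  simpa [mul_comm] using h2.cexp

lemma exp_neg_two_pi (n : ℤ) : Complex.exp (-(Complex.I * n * (2*Real.pi:ℝ))) = 1 := by
  have : -(Complex.I * n * ((2*Real.pi:ℝ):ℂ)) = (-n : ℤ) * (2 * Real.pi * Complex.I) := by
    push_cast; ring
  rw [this, Complex.exp_int_mul_two_pi_mul_I]

lemma ibp_aux (n : ℤ) (hn : (n:ℂ) ≠ 0) (u u' : ℝ → ℂ)
    (hu : ∀ θ, HasDerivAt u (u' θ) θ) (hu' : Continuous u')
    (hper : u (2 * Real.pi) = u 0) :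
    ∫ θ in (0:ℝ)..(2 * Real.pi), u θ * Complex.exp (-(Complex.I * n * θ)) =
      (1/(Complex.I * n)) * ∫ θ in (0:ℝ)..(2 * Real.pi), u' θ * Complex.exp (-(Complex.I * n * θ)) := by
  have hI : (Complex.I * n) ≠ 0 := mul_ne_zero Complex.I_ne_zero hn
  have hcu : Continuous u := by
    rw [continuous_iff_continuousAt]; exact fun θ => (hu θ).continuousAt
  set v : ℝ → ℂ := fun θ => Complex.exp (-(Complex.I * n * θ)) * (-(1/(Complex.I * n))) with hv
  have hvd : ∀ θ : ℝ, HasDerivAt v (Complex.exp (-(Complex.I * n * θ))) θ := by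
    intro θ
    have := (hasDerivAt_expneg n θ).mul_const (-(1/(Complex.I * n)))
    rw [mul_comm _ (Complex.exp _), mul_assoc, neg_mul_neg, mul_one_div_cancel hI, mul_one] at this
    exact this
  have key := intervalIntegral.integral_mul_deriv_eq_deriv_mul
    (u := u) (v := v) (u' := u') (v' := fun θ => Complex.exp (-(Complex.I * n * θ)))
    (a := (0:ℝ)) (b := 2*Real.pi)
    (fun θ _ => hu θ) (fun θ _ => hvd θ)
    (hu'.intervalIntegrable _ _)
    ((Continuous.intervalIntegrable (by fun_prop) _ _))
  have hbnd : u (2*Real.pi) * v (2*Real.pi) - u 0 * v 0 = 0 := by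
    have : v (2*Real.pi) = v 0 := by
      simp only [hv, exp_neg_two_pi]
      norm_num
    rw [this, hper, sub_self]
  rw [hbnd, zero_sub] at key
  rw [key]
  have : ∫ θ in (0:ℝ)..(2 * Real.pi), u' θ * v θ
      = (-(1/(Complex.I * n))) * ∫ θ in (0:ℝ)..(2 * Real.pi), u' θ * Complex.exp (-(Complex.I * n * θ)) := by
    rw [← intervalIntegral.integral_const_mul]
    congr 1; ext θ; simp [hv]; ring
  rw [this]; ring

lemma besselJ_decay (x : ℝ) (n : ℕ) (hn : 1 ≤ n) :
    ‖besselJ (n:ℤ) x‖ ≤ (|x| + x^2) / (n:ℝ)^2 := by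
  have hpi := Real.pi_pos
  have hnR : (0:ℝ) < n := by exact_mod_cast hn
  have hnC : ((n:ℤ):ℂ) ≠ 0 := by exact_mod_cast (by positivity : (0:ℝ) < (n:ℝ)).ne'
  set u1 : ℝ → ℂ := fun θ => Complex.exp (Complex.I * x * (Real.sin θ : ℂ)) with hu1def
  set u1' : ℝ → ℂ := fun θ => Complex.I * x * (Real.cos θ : ℂ) * Complex.exp (Complex.I * x * (Real.sin θ : ℂ)) with hu1'def
  set u2' : ℝ → ℂ := fun θ =>
    Complex.I * x * (-(Real.sin θ : ℂ)) * Complex.exp (Complex.I * x * (Real.sin θ : ℂ))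
      + Complex.I * x * (Real.cos θ : ℂ) *
        (Complex.I * x * (Real.cos θ : ℂ) * Complex.exp (Complex.I * x * (Real.sin θ : ℂ))) with hu2'def
  have hint_eq : ∀ θ : ℝ,
      Complex.exp (Complex.I * ((x : ℂ) * (Real.sin θ : ℂ) - ((n:ℤ) : ℂ) * (θ : ℂ)))
        = u1 θ * Complex.exp (-(Complex.I * ((n:ℤ):ℂ) * θ)) := by
    intro θ
    rw [hu1def, ← Complex.exp_add]
    ring_nf
  have h1 := ibp_aux (n:ℤ) hnC u1 u1' (fun θ => hasDerivAt_u1 x θ) (by fun_prop)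
    (by simp [hu1def])
  have h2 := ibp_aux (n:ℤ) hnC u1' u2' (fun θ => hasDerivAt_u2 x θ) (by fun_prop)
    (by simp [hu1'def, Real.sin_two_pi, Real.cos_two_pi])
  have h3 : ‖∫ θ in (0:ℝ)..(2*Real.pi), u2' θ * Complex.exp (-(Complex.I * ((n:ℤ):ℂ) * θ))‖
      ≤ (|x| + x^2) * |2*Real.pi - 0| := by
    apply intervalIntegral.norm_integral_le_of_norm_le_const
    intro θ _
    rw [norm_mul]
    have he : ‖Complex.exp (-(Complex.I * ((n:ℤ):ℂ) * θ))‖ = 1 := by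
      rw [Complex.norm_exp]; simp [Complex.mul_re]
    rw [he, mul_one]
    exact u2'_bound x θ
  have hIn : ‖(1/(Complex.I * ((n:ℤ):ℂ)))‖ = 1 / (n:ℝ) := by
    rw [norm_div, norm_mul, Complex.norm_I, one_mul, norm_one]
    congr 1
    rw [show (((n:ℤ):ℂ)) = ((n:ℝ):ℂ) by push_cast; ring, Complex.norm_real,
      Real.norm_eq_abs, abs_of_pos hnR]
  rw [besselJ]
  simp only [hint_eq]
  rw [h1, h2]
  rw [norm_mul, norm_mul, norm_mul, hIn]
  have hnorm_half : ‖(1 / (2 * (Real.pi:ℂ)))‖ = 1/(2*Real.pi) := by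
    simp [abs_of_pos hpi]
  rw [hnorm_half]
  calc 1/(2*Real.pi) * (1/(n:ℝ) * (1/(n:ℝ) * ‖∫ θ in (0:ℝ)..(2*Real.pi), u2' θ * Complex.exp (-(Complex.I * ((n:ℤ):ℂ) * θ))‖))
      ≤ 1/(2*Real.pi) * (1/(n:ℝ) * (1/(n:ℝ) * ((|x| + x^2) * |2*Real.pi - 0|))) := by
        apply mul_le_mul_of_nonneg_left _ (by positivity)
        apply mul_le_mul_of_nonneg_left _ (by positivity)
        exact mul_le_mul_of_nonneg_left h3 (by positivity)
    _ = (|x| + x^2) / (n:ℝ)^2 := by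
        rw [abs_of_pos (by linarith : (0:ℝ) < 2*Real.pi - 0)]
        field_simp
        ring_nf

lemma periodic_E (x : ℝ) (n : ℤ) :
    Function.Periodic (fun θ : ℝ =>
      Complex.exp (Complex.I * ((x:ℂ) * (Real.sin θ:ℂ) - (n:ℂ) * (θ:ℂ)))) (2 * Real.pi) := by
  intro θ
  have hs : Real.sin (θ + 2*Real.pi) = Real.sin θ := Real.sin_add_two_pi θ
  simp only [hs]
  rw [show Complex.I * ((x:ℂ) * (Real.sin θ:ℂ) - (n:ℂ) * ((θ + 2*Real.pi : ℝ):ℂ))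
      = Complex.I * ((x:ℂ) * (Real.sin θ:ℂ) - (n:ℂ) * (θ:ℂ)) + (-(Complex.I * (n:ℂ) * ((2*Real.pi:ℝ):ℂ))) by push_cast; ring,
    Complex.exp_add, exp_neg_two_pi, mul_one]

lemma exp_neg_I_pi_div_two : Complex.exp (-(Complex.I * ((Real.pi/2 : ℝ) : ℂ))) = -Complex.I := by
  have : -(Complex.I * ((Real.pi/2 : ℝ) : ℂ)) = ((-(Real.pi/2) : ℝ) : ℂ) * Complex.I := by
    push_cast; ring
  rw [this, Complex.exp_mul_I]
  rw [← Complex.ofReal_cos, ← Complex.ofReal_sin]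
  rw [Real.cos_neg, Real.sin_neg, Real.cos_pi_div_two, Real.sin_pi_div_two]
  simp

lemma two_pi_besselJ (n : ℤ) (x : ℝ) :
    ∫ θ in (0:ℝ)..(2 * Real.pi),
      Complex.exp (Complex.I * ((x : ℂ) * (Real.sin θ : ℂ) - (n : ℂ) * (θ : ℂ)))
      = (2*Real.pi : ℝ) * besselJ n x := by
  rw [besselJ]
  have hpi := Real.pi_ne_zero
  push_cast
  rw [← mul_assoc]
  rw [show (2*(Real.pi:ℂ)) * (1/(2*(Real.pi:ℂ))) = 1 by
    have h2 : (2*(Real.pi:ℂ)) ≠ 0 := mul_ne_zero two_ne_zero (Complex.ofReal_ne_zero.mpr hpi)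
    field_simp]
  rw [one_mul]

lemma besselFourier_neg (x : ℝ) (n : ℕ) :
    ∫ ψ in (0:ℝ)..(2*Real.pi),
        Complex.exp (Complex.I * x * (Real.cos ψ : ℂ)) * Complex.exp (-(Complex.I * n * ψ))
      = Complex.I^n * (2*Real.pi) * besselJ n x := by
  set E : ℝ → ℂ := fun θ =>
    Complex.exp (Complex.I * ((x:ℂ) * (Real.sin θ:ℂ) - ((n:ℤ):ℂ) * (θ:ℂ))) with hE
  set w : ℂ := Complex.exp (-(Complex.I * n * ((Real.pi/2 : ℝ) : ℂ))) with hw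
  have hEshift : ∀ ψ : ℝ, E (ψ + Real.pi/2)
      = Complex.exp (Complex.I * x * (Real.cos ψ : ℂ)) * Complex.exp (-(Complex.I * n * ψ)) * w := by
    intro ψ
    rw [hE]
    simp only [Real.sin_add_pi_div_two]
    rw [← Complex.exp_add, ← Complex.exp_add]
    congr 1
    push_cast
    ring
  have h1 : ∫ ψ in (0:ℝ)..(2*Real.pi), E (ψ + Real.pi/2)
      = ∫ θ in (0 + Real.pi/2 : ℝ)..(2*Real.pi + Real.pi/2), E θ :=
    intervalIntegral.integral_comp_add_right E (Real.pi/2)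
  have h2 : ∫ θ in (Real.pi/2 : ℝ)..(Real.pi/2 + 2*Real.pi), E θ
      = ∫ θ in (0:ℝ)..(0 + 2*Real.pi), E θ :=
    (periodic_E x n).intervalIntegral_add_eq (Real.pi/2) 0
  have h3 : ∫ ψ in (0:ℝ)..(2*Real.pi), E (ψ + Real.pi/2) = (2*Real.pi : ℝ) * besselJ n x := by
    rw [h1, show (0 + Real.pi/2 : ℝ) = Real.pi/2 by ring,
      show (2*Real.pi + Real.pi/2 : ℝ) = Real.pi/2 + 2*Real.pi by ring, h2,
      show (0 + 2*Real.pi : ℝ) = 2*Real.pi by ring]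
    exact two_pi_besselJ n x
  have h4 : ∫ ψ in (0:ℝ)..(2*Real.pi), E (ψ + Real.pi/2)
      = (∫ ψ in (0:ℝ)..(2*Real.pi),
          Complex.exp (Complex.I * x * (Real.cos ψ : ℂ)) * Complex.exp (-(Complex.I * n * ψ))) * w := by
    rw [intervalIntegral.integral_congr
      (g := fun ψ => Complex.exp (Complex.I * x * (Real.cos ψ : ℂ)) *
        Complex.exp (-(Complex.I * n * ψ)) * w) (fun ψ _ => hEshift ψ)]
    exact intervalIntegral.integral_mul_const w _
  have hw_val : w = (-Complex.I)^n := by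
    rw [hw, show -(Complex.I * n * ((Real.pi/2 : ℝ) : ℂ)) = n * (-(Complex.I * ((Real.pi/2:ℝ):ℂ))) by ring,
      Complex.exp_nat_mul, exp_neg_I_pi_div_two]
  have hwI : w * Complex.I^n = 1 := by
    rw [hw_val, ← mul_pow, neg_mul, Complex.I_mul_I, neg_neg, one_pow]
  have h5 := h4.symm.trans h3
  calc (∫ ψ in (0:ℝ)..(2*Real.pi),
          Complex.exp (Complex.I * x * (Real.cos ψ : ℂ)) * Complex.exp (-(Complex.I * n * ψ)))
      = (∫ ψ in (0:ℝ)..(2*Real.pi),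
          Complex.exp (Complex.I * x * (Real.cos ψ : ℂ)) * Complex.exp (-(Complex.I * n * ψ))) * (w * Complex.I^n) := by
        rw [hwI, mul_one]
    _ = ((∫ ψ in (0:ℝ)..(2*Real.pi),
          Complex.exp (Complex.I * x * (Real.cos ψ : ℂ)) * Complex.exp (-(Complex.I * n * ψ))) * w) * Complex.I^n := by
        ring
    _ = ((2*Real.pi : ℝ) * besselJ n x) * Complex.I^n := by rw [h5]
    _ = Complex.I^n * (2*Real.pi) * besselJ n x := by push_cast; ring

lemma besselFourier_pos (x : ℝ) (n : ℕ) :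
    ∫ ψ in (0:ℝ)..(2*Real.pi),
        Complex.exp (Complex.I * x * (Real.cos ψ : ℂ)) * Complex.exp (Complex.I * n * ψ)
      = Complex.I^n * (2*Real.pi) * besselJ n x := by
  set g : ℝ → ℂ := fun ψ =>
    Complex.exp (Complex.I * x * (Real.cos ψ : ℂ)) * Complex.exp (-(Complex.I * n * ψ)) with hg
  have hper : Function.Periodic g (2*Real.pi) := by
    intro ψ
    simp only [hg, Real.cos_add_two_pi]
    congr 1
    rw [show -(Complex.I * n * ((ψ + 2*Real.pi:ℝ):ℂ))
        = -(Complex.I * (n:ℂ) * (ψ:ℂ)) + (-(Complex.I * ((n:ℤ):ℂ) * ((2*Real.pi:ℝ):ℂ))) by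
      push_cast; ring]
    rw [Complex.exp_add, exp_neg_two_pi, mul_one]
  have hpoint : ∀ ψ : ℝ, g (-ψ)
      = Complex.exp (Complex.I * x * (Real.cos ψ : ℂ)) * Complex.exp (Complex.I * n * ψ) := by
    intro ψ
    simp only [hg, Real.cos_neg]
    congr 1
    push_cast
    ring_nf
  calc ∫ ψ in (0:ℝ)..(2*Real.pi),
        Complex.exp (Complex.I * x * (Real.cos ψ : ℂ)) * Complex.exp (Complex.I * n * ψ)
      = ∫ ψ in (0:ℝ)..(2*Real.pi), g (-ψ) := by
        apply intervalIntegral.integral_congr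
        intro ψ _
        exact (hpoint ψ).symm
    _ = ∫ ψ in (-(2*Real.pi):ℝ)..(-(0:ℝ)), g ψ := intervalIntegral.integral_comp_neg g
    _ = ∫ ψ in (0:ℝ)..(2*Real.pi), g ψ := by
        rw [neg_zero]
        have := hper.intervalIntegral_add_eq (-(2*Real.pi)) 0
        rw [show -(2*Real.pi) + 2*Real.pi = 0 by ring, show (0:ℝ) + 2*Real.pi = 2*Real.pi by ring] at this
        exact this
    _ = Complex.I^n * (2*Real.pi) * besselJ n x := besselFourier_neg x n

lemma besselFourier_cos (x : ℝ) (n : ℕ) :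
    ∫ ψ in (0:ℝ)..(2*Real.pi),
        Complex.exp (Complex.I * x * (Real.cos ψ : ℂ)) * ((Real.cos ((n:ℝ)*ψ) : ℝ):ℂ)
      = Complex.I^n * (2*Real.pi) * besselJ n x := by
  have hcos : ∀ ψ : ℝ, Complex.exp (Complex.I * x * (Real.cos ψ : ℂ)) * ((Real.cos ((n:ℝ)*ψ) : ℝ):ℂ)
      = (Complex.exp (Complex.I * x * (Real.cos ψ : ℂ)) * Complex.exp (Complex.I * n * ψ)
        + Complex.exp (Complex.I * x * (Real.cos ψ : ℂ)) * Complex.exp (-(Complex.I * n * ψ)))/2 := by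
    intro ψ
    have h2 : ((Real.cos ((n:ℝ)*ψ) : ℝ):ℂ)
        = (Complex.exp (Complex.I * n * ψ) + Complex.exp (-(Complex.I * n * ψ)))/2 := by
      rw [Complex.ofReal_cos, eq_div_iff (two_ne_zero' ℂ), mul_comm, Complex.two_cos]
      congr 2 <;> push_cast <;> ring
    rw [h2]
    ring
  rw [intervalIntegral.integral_congr (g := fun ψ =>
    (Complex.exp (Complex.I * x * (Real.cos ψ : ℂ)) * Complex.exp (Complex.I * n * ψ)
      + Complex.exp (Complex.I * x * (Real.cos ψ : ℂ)) * Complex.exp (-(Complex.I * n * ψ)))/2)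
    (fun ψ _ => hcos ψ)]
  rw [intervalIntegral.integral_div]
  rw [intervalIntegral.integral_add
    ((Continuous.intervalIntegrable (by fun_prop) _ _))
    ((Continuous.intervalIntegrable (by fun_prop) _ _))]
  rw [besselFourier_pos, besselFourier_neg]
  ring

lemma summable_inv_sq : Summable (fun p : ℕ => 1 / ((p:ℝ)+1)^2) := by
  have h : Summable (fun n : ℕ => 1 / (n:ℝ)^2) :=
    Real.summable_one_div_nat_pow.mpr one_lt_two
  have := (summable_nat_add_iff (f := fun n : ℕ => 1 / (n:ℝ)^2) 1).mpr h
  refine this.congr fun p => ?_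
  push_cast
  ring_nf

lemma besselJ_decay' (x : ℝ) (p : ℕ) :
    ‖besselJ ((p:ℤ) + 1) x‖ ≤ (|x| + x^2) / ((p:ℝ)+1)^2 := by
  have h := besselJ_decay x (p+1) (by omega)
  have h1 : ((p+1 : ℕ) : ℤ) = (p:ℤ) + 1 := by push_cast; ring
  have h2 : ((p+1 : ℕ) : ℝ) = (p:ℝ) + 1 := by push_cast; ring
  rwa [h1, h2] at h

/-- Weighted product-average lemma: for real `x`, `φ` and a bounded sequence `(c_p)_{p≥1}`
of real numbers,
`(1/(2π)) ∫_0^{2π} exp(i x cos(ϑ − φ)) (J_0(x) + 2 ∑_{p=1}^∞ c_p i^p J_p(x) cos(p(ϑ − φ))) dϑ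
  = J_0(x)² + 2 ∑_{p=1}^∞ (−1)^p c_p J_p(x)²`, both series converging absolutely. -/
theorem weighted_product_average (x φ : ℝ) (c : ℕ → ℝ) (hc : ∃ B : ℝ, ∀ p : ℕ, |c p| ≤ B) :
    (∀ ϑ : ℝ,
      Summable (fun p : ℕ =>
        ‖(c (p + 1) : ℂ) * Complex.I ^ (p + 1) * besselJ (p + 1) x *
          (Real.cos (((p : ℝ) + 1) * (ϑ - φ)) : ℂ)‖)) ∧
    Summable (fun p : ℕ =>
      ‖(-1 : ℂ) ^ (p + 1) * (c (p + 1) : ℂ) * besselJ (p + 1) x ^ 2‖) ∧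
    (1 / (2 * (Real.pi : ℂ))) *
        ∫ ϑ in (0:ℝ)..(2 * Real.pi),
          Complex.exp (Complex.I * (x : ℂ) * (Real.cos (ϑ - φ) : ℂ)) *
            (besselJ 0 x +
              2 * ∑' p : ℕ,
                (c (p + 1) : ℂ) * Complex.I ^ (p + 1) * besselJ (p + 1) x *
                  (Real.cos (((p : ℝ) + 1) * (ϑ - φ)) : ℂ))
      = besselJ 0 x ^ 2 +
        2 * ∑' p : ℕ, (-1 : ℂ) ^ (p + 1) * (c (p + 1) : ℂ) * besselJ (p + 1) x ^ 2 := by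
  obtain ⟨B, hB⟩ := hc
  have hB0 : 0 ≤ B := le_trans (abs_nonneg _) (hB 0)
  set D : ℝ := |x| + x^2 with hD
  have hD0 : 0 ≤ D := by positivity
  set a : ℕ → ℝ := fun p => B * (D / ((p:ℝ)+1)^2) with ha
  have ha_sum : Summable a := by
    have := summable_inv_sq.mul_left (B * D)
    refine this.congr fun p => ?_
    simp only [ha]
    field_simp
  set t : ℕ → ℝ → ℂ := fun p ψ =>
    (c (p + 1) : ℂ) * Complex.I ^ (p + 1) * besselJ ((p:ℤ) + 1) x *
      ((Real.cos (((p : ℝ) + 1) * ψ) : ℝ) : ℂ) with ht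
  have hbound : ∀ (p : ℕ) (ψ : ℝ), ‖t p ψ‖ ≤ a p := by
    intro p ψ
    simp only [ht, ha, norm_mul, norm_pow, Complex.norm_I, one_pow, mul_one,
      Complex.norm_real, Real.norm_eq_abs]
    have h1 : |c (p+1)| ≤ B := hB (p+1)
    have h2 : ‖besselJ ((p:ℤ)+1) x‖ ≤ D / ((p:ℝ)+1)^2 := besselJ_decay' x p
    have h3 : |Real.cos (((p:ℝ)+1) * ψ)| ≤ 1 := abs_le.mpr ⟨Real.neg_one_le_cos _, Real.cos_le_one _⟩
    calc |c (p+1)| * ‖besselJ ((p:ℤ)+1) x‖ * |Real.cos (((p:ℝ)+1) * ψ)|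
        ≤ |c (p+1)| * ‖besselJ ((p:ℤ)+1) x‖ * 1 := by
          apply mul_le_mul_of_nonneg_left h3 (by positivity)
      _ = |c (p+1)| * ‖besselJ ((p:ℤ)+1) x‖ := mul_one _
      _ ≤ B * (D / ((p:ℝ)+1)^2) :=
          mul_le_mul h1 h2 (norm_nonneg _) hB0
  -- first summability claim
  have claim1 : ∀ ϑ : ℝ,
      Summable (fun p : ℕ =>
        ‖(c (p + 1) : ℂ) * Complex.I ^ (p + 1) * besselJ (p + 1) x *
          (Real.cos (((p : ℝ) + 1) * (ϑ - φ)) : ℂ)‖) := by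
    intro ϑ
    exact Summable.of_nonneg_of_le (fun p => norm_nonneg _)
      (fun p => hbound p (ϑ - φ)) ha_sum
  -- second summability claim
  have claim2 : Summable (fun p : ℕ =>
      ‖(-1 : ℂ) ^ (p + 1) * (c (p + 1) : ℂ) * besselJ (p + 1) x ^ 2‖) := by
    refine Summable.of_nonneg_of_le (fun p => norm_nonneg _) (fun p => ?_) ha_sum
    simp only [norm_mul, norm_pow, norm_neg, norm_one, one_pow, one_mul,
      Complex.norm_real, Real.norm_eq_abs, ha]
    have h1 : |c (p+1)| ≤ B := hB (p+1)
    have h2 : ‖besselJ ((p:ℤ)+1) x‖ ≤ D / ((p:ℝ)+1)^2 := besselJ_decay' x p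
    have h3 : ‖besselJ ((p:ℤ)+1) x‖ ≤ 1 := besselJ_norm_le_one _ _
    calc |c (p+1)| * ‖besselJ ((p:ℤ)+1) x‖^2
        ≤ B * (D / ((p:ℝ)+1)^2 * 1) := by
          rw [sq]
          apply mul_le_mul h1 _ (by positivity) hB0
          exact mul_le_mul h2 h3 (norm_nonneg _) (by positivity)
      _ = B * (D / ((p:ℝ)+1)^2) := by rw [mul_one]
  refine ⟨claim1, claim2, ?_⟩

  -- main computation
  have hpi := Real.pi_pos
  have h2pi_ne : (2*(Real.pi:ℂ)) ≠ 0 := mul_ne_zero two_ne_zero (Complex.ofReal_ne_zero.mpr Real.pi_ne_zero)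
  have ha0 : ∀ p, 0 ≤ a p := by
    intro p
    have : (0:ℝ) ≤ D / ((p:ℝ)+1)^2 := by positivity
    exact mul_nonneg hB0 this
  have hexp_cos_norm : ∀ ψ : ℝ, ‖Complex.exp (Complex.I * x * (Real.cos ψ:ℂ))‖ = 1 := by
    intro ψ
    rw [Complex.norm_exp]
    simp [Complex.mul_re, Complex.mul_im]
  set T : ℝ → ℂ := fun ψ => ∑' p : ℕ, t p ψ with hT
  have htcont : ∀ p, Continuous (t p) := by
    intro p
    simp only [ht]
    fun_prop
  have hTcont : Continuous T := continuous_tsum htcont ha_sum (fun p ψ => hbound p ψ)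
  set F : ℝ → ℂ := fun ψ => Complex.exp (Complex.I * x * (Real.cos ψ:ℂ)) * (besselJ 0 x + 2 * T ψ) with hF
  have hFcont : Continuous F := by
    apply Continuous.mul (by fun_prop)
    exact continuous_const.add (continuous_const.mul hTcont)
  have hTper : ∀ ψ : ℝ, T (ψ + 2*Real.pi) = T ψ := by
    intro ψ
    refine tsum_congr fun p => ?_
    simp only [ht]
    congr 2
    rw [show ((p:ℝ)+1)*(ψ+2*Real.pi) = ((p:ℝ)+1)*ψ + ((p+1:ℕ):ℝ)*(2*Real.pi) by push_cast; ring,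
      Real.cos_add_nat_mul_two_pi]
  have hFper : Function.Periodic F (2*Real.pi) := by
    intro ψ
    simp only [hF, Real.cos_add_two_pi, hTper ψ]
  have hmain : (∫ ϑ in (0:ℝ)..(2*Real.pi), F (ϑ - φ)) = ∫ ψ in (0:ℝ)..(2*Real.pi), F ψ := by
    rw [intervalIntegral.integral_comp_sub_right F φ]
    have h := hFper.intervalIntegral_add_eq (0 - φ) 0
    rw [show (0 - φ) + 2*Real.pi = 2*Real.pi - φ by ring,
      show (0:ℝ) + 2*Real.pi = 2*Real.pi by ring] at h
    exact h
  have hq0 : (∫ ψ in (0:ℝ)..(2*Real.pi), Complex.exp (Complex.I * x * (Real.cos ψ:ℂ)))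
      = 2*(Real.pi:ℂ) * besselJ 0 x := by
    have h := besselFourier_cos x 0
    simpa using h
  have hsplit : (∫ ψ in (0:ℝ)..(2*Real.pi), F ψ)
      = (∫ ψ in (0:ℝ)..(2*Real.pi), Complex.exp (Complex.I * x * (Real.cos ψ:ℂ)) * besselJ 0 x)
        + 2 * ∫ ψ in (0:ℝ)..(2*Real.pi), Complex.exp (Complex.I * x * (Real.cos ψ:ℂ)) * T ψ := by
    rw [← intervalIntegral.integral_const_mul]
    rw [← intervalIntegral.integral_add
      (Continuous.intervalIntegrable (by fun_prop) _ _)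
      (Continuous.intervalIntegrable (by exact continuous_const.mul ((by fun_prop : Continuous fun ψ : ℝ => Complex.exp (Complex.I * x * (Real.cos ψ:ℂ))).mul hTcont)) _ _)]
    apply intervalIntegral.integral_congr
    intro ψ _
    simp only [hF]
    ring
  have hg1 : (∫ ψ in (0:ℝ)..(2*Real.pi), Complex.exp (Complex.I * x * (Real.cos ψ:ℂ)) * besselJ 0 x)
      = 2*(Real.pi:ℂ) * (besselJ 0 x)^2 := by
    rw [intervalIntegral.integral_mul_const, hq0]
    ring
  have hswap : (∫ ψ in (0:ℝ)..(2*Real.pi), Complex.exp (Complex.I * x * (Real.cos ψ:ℂ)) * T ψ)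
      = ∑' p : ℕ, ∫ ψ in (0:ℝ)..(2*Real.pi), Complex.exp (Complex.I * x * (Real.cos ψ:ℂ)) * t p ψ := by
    have hle : (0:ℝ) ≤ 2*Real.pi := by linarith
    have hppt : ∀ (p : ℕ) (ψ : ℝ), ‖Complex.exp (Complex.I * x * (Real.cos ψ:ℂ)) * t p ψ‖ ≤ a p := by
      intro p ψ
      rw [norm_mul, hexp_cos_norm, one_mul]
      exact hbound p ψ
    have h1 : ∀ ψ : ℝ, Complex.exp (Complex.I * x * (Real.cos ψ:ℂ)) * T ψ
        = ∑' p : ℕ, Complex.exp (Complex.I * x * (Real.cos ψ:ℂ)) * t p ψ := by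
      intro ψ
      simp only [hT]
      exact (tsum_mul_left).symm
    rw [intervalIntegral.integral_congr (g := fun ψ =>
        ∑' p : ℕ, Complex.exp (Complex.I * x * (Real.cos ψ:ℂ)) * t p ψ) (fun ψ _ => h1 ψ)]
    rw [intervalIntegral.integral_of_le hle]
    rw [MeasureTheory.integral_tsum (f := fun p ψ => Complex.exp (Complex.I * x * (Real.cos ψ:ℂ)) * t p ψ)
      (fun p => (((by fun_prop : Continuous fun ψ : ℝ => Complex.exp (Complex.I * x * (Real.cos ψ:ℂ))).mul (htcont p))).aestronglyMeasurable)
      ?_]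
    · exact tsum_congr fun p => (intervalIntegral.integral_of_le hle).symm
    · have hbnd : ∀ p : ℕ, (∫⁻ ψ in Set.Ioc (0:ℝ) (2*Real.pi),
          ‖Complex.exp (Complex.I * x * (Real.cos ψ:ℂ)) * t p ψ‖₊ ∂volume)
            ≤ ENNReal.ofReal (a p * (2*Real.pi)) := by
        intro p
        calc (∫⁻ ψ in Set.Ioc (0:ℝ) (2*Real.pi),
              ‖Complex.exp (Complex.I * x * (Real.cos ψ:ℂ)) * t p ψ‖₊ ∂volume)
            ≤ ∫⁻ _ in Set.Ioc (0:ℝ) (2*Real.pi), ENNReal.ofReal (a p) ∂volume := by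
              apply MeasureTheory.lintegral_mono
              intro ψ
              show ((‖Complex.exp (Complex.I * x * (Real.cos ψ:ℂ)) * t p ψ‖₊ : ENNReal))
                ≤ ENNReal.ofReal (a p)
              rw [← ENNReal.ofReal_coe_nnreal, coe_nnnorm]
              exact ENNReal.ofReal_le_ofReal (hppt p ψ)
          _ = ENNReal.ofReal (a p) * volume (Set.Ioc (0:ℝ) (2*Real.pi)) :=
              MeasureTheory.setLIntegral_const _ _
          _ = ENNReal.ofReal (a p * (2*Real.pi)) := by
              rw [Real.volume_Ioc, sub_zero, ← ENNReal.ofReal_mul (ha0 p)]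
      have heq : (∑' p : ℕ, ENNReal.ofReal (a p * (2*Real.pi)))
          = ENNReal.ofReal (∑' p : ℕ, a p * (2*Real.pi)) :=
        (ENNReal.ofReal_tsum_of_nonneg (fun p => mul_nonneg (ha0 p) (by linarith))
          (ha_sum.mul_right _)).symm
      have hle2 := le_of_le_of_eq (ENNReal.tsum_le_tsum hbnd) heq
      exact ne_top_of_le_ne_top ENNReal.ofReal_ne_top hle2
  have hterm : ∀ p : ℕ,
      (∫ ψ in (0:ℝ)..(2*Real.pi), Complex.exp (Complex.I * x * (Real.cos ψ:ℂ)) * t p ψ)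
        = 2*(Real.pi:ℂ) * ((-1:ℂ)^(p+1) * (c (p+1):ℂ) * besselJ ((p:ℤ)+1) x ^ 2) := by
    intro p
    have hfc := besselFourier_cos x (p+1)
    have h1 : (∫ ψ in (0:ℝ)..(2*Real.pi), Complex.exp (Complex.I * x * (Real.cos ψ:ℂ)) * t p ψ)
        = (∫ ψ in (0:ℝ)..(2*Real.pi), Complex.exp (Complex.I * x * (Real.cos ψ:ℂ))
            * ((Real.cos ((((p+1:ℕ)):ℝ)*ψ) : ℝ):ℂ))
          * ((c (p+1):ℂ) * Complex.I^(p+1) * besselJ ((p:ℤ)+1) x) := by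
      rw [← intervalIntegral.integral_mul_const]
      apply intervalIntegral.integral_congr
      intro ψ _
      simp only [ht]
      rw [show (((p+1:ℕ)):ℝ)*ψ = ((p:ℝ)+1)*ψ by push_cast; ring]
      ring
    rw [h1, hfc]
    have hI2 : Complex.I^(p+1) * Complex.I^(p+1) = (-1:ℂ)^(p+1) := by
      rw [← mul_pow, Complex.I_mul_I]
    have hJcast : (((p+1:ℕ)):ℤ) = (p:ℤ)+1 := by push_cast; ring
    rw [hJcast]
    calc Complex.I^(p+1) * (2*(Real.pi:ℂ)) * besselJ ((p:ℤ)+1) x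
          * ((c (p+1):ℂ) * Complex.I^(p+1) * besselJ ((p:ℤ)+1) x)
        = (Complex.I^(p+1) * Complex.I^(p+1)) * (2*(Real.pi:ℂ))
            * ((c (p+1):ℂ) * besselJ ((p:ℤ)+1) x ^ 2) := by ring
      _ = 2*(Real.pi:ℂ) * ((-1:ℂ)^(p+1) * (c (p+1):ℂ) * besselJ ((p:ℤ)+1) x ^ 2) := by
          rw [hI2]; ring
  have hfinal : (∫ ψ in (0:ℝ)..(2*Real.pi), F ψ)
      = 2*(Real.pi:ℂ) * ((besselJ 0 x)^2
          + 2 * ∑' p : ℕ, (-1:ℂ)^(p+1) * (c (p+1):ℂ) * besselJ ((p:ℤ)+1) x ^ 2) := by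
    rw [hsplit, hg1, hswap]
    have : (∑' p : ℕ, ∫ ψ in (0:ℝ)..(2*Real.pi),
          Complex.exp (Complex.I * x * (Real.cos ψ:ℂ)) * t p ψ)
        = 2*(Real.pi:ℂ) * ∑' p : ℕ, (-1:ℂ)^(p+1) * (c (p+1):ℂ) * besselJ ((p:ℤ)+1) x ^ 2 := by
      rw [← tsum_mul_left]
      exact tsum_congr hterm
    rw [this]
    ring
  calc (1 / (2 * (Real.pi : ℂ))) *
        ∫ ϑ in (0:ℝ)..(2 * Real.pi),
          Complex.exp (Complex.I * (x : ℂ) * (Real.cos (ϑ - φ) : ℂ)) *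
            (besselJ 0 x + 2 * ∑' p : ℕ,
                (c (p + 1) : ℂ) * Complex.I ^ (p + 1) * besselJ (p + 1) x *
                  (Real.cos (((p : ℝ) + 1) * (ϑ - φ)) : ℂ))
      = (1 / (2 * (Real.pi : ℂ))) * ∫ ϑ in (0:ℝ)..(2 * Real.pi), F (ϑ - φ) := rfl
    _ = (1 / (2 * (Real.pi : ℂ))) * (2*(Real.pi:ℂ) * ((besselJ 0 x)^2
          + 2 * ∑' p : ℕ, (-1:ℂ)^(p+1) * (c (p+1):ℂ) * besselJ ((p:ℤ)+1) x ^ 2)) := by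
        rw [hmain, hfinal]
    _ = besselJ 0 x ^ 2 +
        2 * ∑' p : ℕ, (-1 : ℂ) ^ (p + 1) * (c (p + 1) : ℂ) * besselJ (p + 1) x ^ 2 := by
        field_simp
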